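/- arXiv:2112.10561 — 4 statements merged into one kernel-verified Lean document; each statement's English description precedes it below -/
import Mathlib

section
/- Let Q(x,y) = a x² + b x y + c y² be a real positive definite binary quadratic form (a > 0, b² − 4ac < 0). Then for every complex s with Re(s) > 1, the family (m,n) ↦ Q(m,n)^{−s} indexed by pairs of integers (m,n) ≠ (0,0) is summable; i.e. the classical Epstein zeta function Z₂(s,Q) = ∑_{(m,n)∈ℤ²∖{(0,0)}} Q(m,n)^{−s} converges absolutely for Re(s) > 1. -/
open Complex

/-- Absolute convergence of the classical Epstein zeta function
`Z₂(s,Q) = ∑_{(m,n)≠(0,0)} Q(m,n)^{-s}` for `Re(s) > 1`. -/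
theorem epstein_zeta_summable (a b c : ℝ) (ha : 0 < a) (hd : b ^ 2 - 4 * a * c < 0)
    (s : ℂ) (hs : 1 < s.re) :
    Summable (fun p : {p : ℤ × ℤ // p ≠ (0, 0)} =>
      ((a * (p.1.1 : ℝ) ^ 2 + b * (p.1.1 : ℝ) * (p.1.2 : ℝ) + c * (p.1.2 : ℝ) ^ 2 : ℝ) : ℂ)
        ^ (-s)) := by
  have hc : 0 < c := by nlinarith [sq_nonneg b]
  set D : ℝ := 4 * a * c - b ^ 2 with hDdef
  have hD : 0 < D := by simp only [hDdef]; linarith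
  set ε : ℝ := min (D / (4 * a)) (D / (4 * c)) with hεdef
  have hε : 0 < ε := lt_min (by positivity) (by positivity)
  have key : ∀ x y : ℝ, ε * (max |x| |y|) ^ 2 ≤ a * x ^ 2 + b * x * y + c * y ^ 2 := by
    intro x y
    rcases le_total |x| |y| with h | h
    · rw [max_eq_right h]
      have h1 : ε ≤ D / (4 * a) := min_le_left _ _
      have h2 : 0 ≤ (2 * a * x + b * y) ^ 2 := sq_nonneg _
      have h3 : |y| ^ 2 = y ^ 2 := sq_abs y
      rw [h3]
      have h4 : ε * (4 * a) ≤ D := by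
        calc ε * (4 * a) ≤ D / (4 * a) * (4 * a) := by nlinarith
          _ = D := by field_simp
      nlinarith [sq_nonneg y]
    · rw [max_eq_left h]
      have h1 : ε ≤ D / (4 * c) := min_le_right _ _
      have h2 : 0 ≤ (b * x + 2 * c * y) ^ 2 := sq_nonneg _
      have h3 : |x| ^ 2 = x ^ 2 := sq_abs x
      rw [h3]
      have h4 : ε * (4 * c) ≤ D := by
        calc ε * (4 * c) ≤ D / (4 * c) * (4 * c) := by nlinarith
          _ = D := by field_simp
      nlinarith [sq_nonneg x]
  apply Summable.of_norm
  have hbase : Summable fun x : Fin 2 → ℤ => ‖x‖ ^ (-(2 * s.re)) :=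
    EisensteinSeries.summable_one_div_norm_rpow (by linarith)
  have hinj : Function.Injective
      (fun p : {p : ℤ × ℤ // p ≠ (0, 0)} => (![p.1.1, p.1.2] : Fin 2 → ℤ)) := by
    intro p q hpq
    have h0 := congrFun hpq 0
    have h1 := congrFun hpq 1
    simp only [Matrix.cons_val_zero, Matrix.cons_val_one, Matrix.head_cons] at h0 h1
    exact Subtype.ext (Prod.ext h0 h1)
  have hsum : Summable fun p : {p : ℤ × ℤ // p ≠ (0, 0)} =>
      ε ^ (-s.re) * ‖(![p.1.1, p.1.2] : Fin 2 → ℤ)‖ ^ (-(2 * s.re)) :=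
    ((hbase.comp_injective hinj).mul_left _)
  apply hsum.of_nonneg_of_le (fun p => norm_nonneg _)
  rintro ⟨⟨m, n⟩, hp⟩
  set N : ℝ := ‖(![m, n] : Fin 2 → ℤ)‖ with hNdef
  have hNeq : N = max |(m : ℝ)| |(n : ℝ)| := by
    rw [hNdef, EisensteinSeries.norm_eq_max_natAbs]
    simp only [Matrix.cons_val_zero, Matrix.cons_val_one, Matrix.head_cons]
    push_cast [Nat.cast_natAbs]
    rfl
  have hN1 : 1 ≤ N := by
    rw [hNeq]
    rcases (not_and_or.mp (fun h => hp (Prod.ext h.1 h.2))) with h | h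
    · exact le_max_of_le_left (by exact_mod_cast Int.one_le_abs h)
    · exact le_max_of_le_right (by exact_mod_cast Int.one_le_abs h)
  set Q : ℝ := a * (m : ℝ) ^ 2 + b * (m : ℝ) * (n : ℝ) + c * (n : ℝ) ^ 2 with hQdef
  have hQge : ε * N ^ 2 ≤ Q := by rw [hNeq]; exact key _ _
  have hεN : 0 < ε * N ^ 2 := by positivity
  have hQpos : 0 < Q := lt_of_lt_of_le hεN hQge
  have hnorm : ‖((Q : ℝ) : ℂ) ^ (-s)‖ = Q ^ (-s.re) := by
    rw [Complex.norm_cpow_eq_rpow_re_of_pos hQpos, Complex.neg_re]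
  rw [hnorm]
  calc Q ^ (-s.re) ≤ (ε * N ^ 2) ^ (-s.re) :=
        Real.rpow_le_rpow_of_nonpos hεN hQge (by linarith)
    _ = ε ^ (-s.re) * N ^ (-(2 * s.re)) := by
        rw [Real.mul_rpow hε.le (by positivity), ← Real.rpow_natCast N 2,
          ← Real.rpow_mul (by positivity : (0:ℝ) ≤ N)]
        norm_num
end

section
/- For complex numbers z and s with 0 < Re(z) < Re(s), the integral ∫₀^∞ x^{z−1} (1+x)^{−s} dx converges and equals Γ(z) Γ(s−z) / Γ(s). -/
open Complex MeasureTheory Set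

/-- The Beta integral in Mellin form: for `0 < Re z < Re s`,
`∫₀^∞ x^{z-1} (1+x)^{-s} dx = Γ(z) Γ(s-z) / Γ(s)`. -/
theorem beta_mellin_integral (z s : ℂ) (hz : 0 < z.re) (hzs : z.re < s.re) :
    IntegrableOn (fun x : ℝ => (x : ℂ) ^ (z - 1) * ((1 + x : ℝ) : ℂ) ^ (-s)) (Ioi 0) ∧
      ∫ x : ℝ in Ioi 0, (x : ℂ) ^ (z - 1) * ((1 + x : ℝ) : ℂ) ^ (-s) =
        Complex.Gamma z * Complex.Gamma (s - z) / Complex.Gamma s := by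
  set g : ℝ → ℂ := fun x : ℝ => (x : ℂ) ^ (z - 1) * ((1 + x : ℝ) : ℂ) ^ (-s) with hg
  set φ : ℝ → ℝ := fun t => t / (1 - t) with hφ
  have himg : φ '' Ioo (0 : ℝ) 1 = Ioi 0 := by
    ext x
    simp only [mem_image, mem_Ioi, mem_Ioo, hφ]
    constructor
    · rintro ⟨t, ⟨ht0, ht1⟩, rfl⟩
      exact div_pos ht0 (by linarith)
    · intro hx
      refine ⟨x / (1 + x), ⟨by positivity, ?_⟩, ?_⟩
      · rw [div_lt_one (by linarith)]; linarith
      · have h1 : (1 : ℝ) + x ≠ 0 := by positivity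
        field_simp; ring
  have hderiv : ∀ t ∈ Ioo (0 : ℝ) 1, HasDerivWithinAt φ ((1 - t)⁻¹ ^ 2) (Ioo 0 1) t := by
    intro t ht
    have h1 : (1 : ℝ) - t ≠ 0 := by have := ht.2; intro h; linarith [sub_eq_zero.mp h]
    have : HasDerivAt φ ((1 * (1 - t) - t * (-1)) / (1 - t) ^ 2) t :=
      (hasDerivAt_id t).div ((hasDerivAt_id t).const_sub 1) h1
    convert this.hasDerivWithinAt using 1
    case e'_9 => rw [inv_pow]; ring
    all_goals rfl
  have hinj : InjOn φ (Ioo 0 1) := by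
    intro a ha b hb hab
    have h1 : (1 : ℝ) - a ≠ 0 := by have := ha.2; intro h; linarith [sub_eq_zero.mp h]
    have h2 : (1 : ℝ) - b ≠ 0 := by have := hb.2; intro h; linarith [sub_eq_zero.mp h]
    simp only [hφ] at hab; rw [div_eq_div_iff h1 h2] at hab
    linarith
  -- the transformed integrand equals the Beta integrand
  have hpt : ∀ t ∈ Ioo (0 : ℝ) 1,
      |(1 - t)⁻¹ ^ 2| • g (φ t) = (t : ℂ) ^ (z - 1) * (1 - (t : ℂ)) ^ (s - z - 1) := by
    intro t ht
    obtain ⟨ht0, ht1⟩ := ht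
    have hb : (0 : ℝ) < 1 - t := by linarith
    have hbC : ((1 - t : ℝ) : ℂ) ≠ 0 := ofReal_ne_zero.mpr hb.ne'
    have harg : ((1 - t : ℝ) : ℂ).arg ≠ Real.pi := by
      rw [arg_ofReal_of_nonneg hb.le]; exact Real.pi_ne_zero.symm
    have hφt : φ t = t * (1 - t)⁻¹ := by rw [hφ]; ring
    have h1p : (1 : ℝ) + t * (1 - t)⁻¹ = (1 - t)⁻¹ := by
      field_simp; ring
    simp only [hg, hφt]
    rw [h1p]
    have habs : |(1 - t)⁻¹ ^ 2| = (1 - t)⁻¹ ^ 2 := abs_of_pos (by positivity)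
    have e1 : ((t * (1 - t)⁻¹ : ℝ) : ℂ) ^ (z - 1) =
        (t : ℂ) ^ (z - 1) * ((1 - t : ℝ) : ℂ) ^ (-(z - 1)) := by
      rw [ofReal_mul, mul_cpow_ofReal_nonneg ht0.le (by positivity), ofReal_inv,
        inv_cpow _ _ harg, ← cpow_neg]
    have e2 : (((1 - t)⁻¹ : ℝ) : ℂ) ^ (-s) = ((1 - t : ℝ) : ℂ) ^ s := by
      rw [ofReal_inv, inv_cpow _ _ harg, ← cpow_neg, neg_neg]
    have e3 : ((|(1 - t)⁻¹ ^ 2| : ℝ) : ℂ) = ((1 - t : ℝ) : ℂ) ^ (-2 : ℂ) := by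
      rw [habs, show (-2 : ℂ) = -((2 : ℕ) : ℂ) by norm_num, cpow_neg, cpow_natCast]
      push_cast
      rw [inv_pow]
    have e4 : ((1 - t : ℝ) : ℂ) ^ (-(z - 1)) * ((1 - t : ℝ) : ℂ) ^ s *
        ((1 - t : ℝ) : ℂ) ^ (-2 : ℂ) = ((1 - t : ℝ) : ℂ) ^ (s - z - 1) := by
      rw [← cpow_add _ _ hbC, ← cpow_add _ _ hbC]
      congr 1
      ring
    rw [e1, e2, real_smul, e3]
    push_cast at e4 ⊢
    rw [← e4]
    ring
  -- convergence of the Beta integrand on Ioo 0 1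
  have hsz : 0 < (s - z).re := by rw [sub_re]; linarith
  have hbeta := Complex.betaIntegral_convergent hz hsz
  have hbeta' : IntegrableOn (fun t : ℝ => (t : ℂ) ^ (z - 1) * (1 - (t : ℂ)) ^ (s - z - 1))
      (Ioo (0 : ℝ) 1) := by
    have := (intervalIntegrable_iff_integrableOn_Ioo_of_le (by norm_num : (0:ℝ) ≤ 1)).mp hbeta
    exact this
  constructor
  · rw [← himg,
      integrableOn_image_iff_integrableOn_abs_deriv_smul measurableSet_Ioo hderiv hinj g]
    exact (integrableOn_congr_fun (fun t ht => hpt t ht) measurableSet_Ioo).mpr hbeta'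
  · rw [← himg,
      integral_image_eq_integral_abs_deriv_smul measurableSet_Ioo hderiv hinj g,
      setIntegral_congr_fun measurableSet_Ioo hpt]
    have hBval : ∫ t in Ioo (0:ℝ) 1, (t : ℂ) ^ (z - 1) * (1 - (t : ℂ)) ^ (s - z - 1) =
        Complex.betaIntegral z (s - z) := by
      rw [Complex.betaIntegral, intervalIntegral.integral_of_le (by norm_num : (0:ℝ) ≤ 1),
        ← integral_Ioc_eq_integral_Ioo]
    rw [hBval]
    have hG := Complex.Gamma_mul_Gamma_eq_betaIntegral hz hsz
    rw [add_sub_cancel] at hG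
    rw [eq_div_iff (Complex.Gamma_ne_zero_of_re_pos (by linarith : 0 < s.re))]
    rw [hG]; ring
end

section
/- For every real α > 0 and every real β, the following theta reflection formula holds: 1/2 + ∑_{n≥1} e^{−α n²} cos(β n) = (1/2) √(π/α) · ∑_{n∈ℤ} e^{−(π n + β/2)²/α}. -/
open Real

/-- The shifted theta reflection formula:
`1/2 + ∑_{n≥1} e^{-α n²} cos(β n) = (1/2)√(π/α) ∑_{n∈ℤ} e^{-(π n + β/2)²/α}`. -/
theorem theta_reflection (α β : ℝ) (hα : 0 < α) :
    1 / 2 + ∑' n : ℕ, Real.exp (-α * ((n : ℝ) + 1) ^ 2) * Real.cos (β * ((n : ℝ) + 1)) =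
      1 / 2 * Real.sqrt (π / α) *
        ∑' n : ℤ, Real.exp (-(π * (n : ℝ) + β / 2) ^ 2 / α) := by
  have hπ : (0 : ℝ) < π := Real.pi_pos
  have hπ0 : (π : ℂ) ≠ 0 := Complex.ofReal_ne_zero.mpr hπ.ne'
  have hα0 : (α : ℂ) ≠ 0 := Complex.ofReal_ne_zero.mpr hα.ne'
  set F : ℤ → ℝ := fun n => Real.exp (-α * (n:ℝ)^2) * Real.cos (β * n) with hF
  -- Apply the Jacobi theta transformation with a = α/π, b = Iβ/(2π)
  have key := Complex.tsum_exp_neg_quadratic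
    (a := ((α / π : ℝ) : ℂ)) (by rw [Complex.ofReal_re]; positivity)
    (Complex.I * β / (2 * π))
  -- simplify the exponents
  have h1 : ∀ n : ℤ, -(π:ℂ) * ((α/π : ℝ):ℂ) * (n:ℂ)^2 + 2*π*(Complex.I * β / (2*π))*(n:ℂ)
      = ((-α * (n:ℝ)^2 : ℝ) : ℂ) + ((β * n : ℝ) : ℂ) * Complex.I := by
    intro n
    push_cast
    field_simp
  have h2 : ∀ n : ℤ, -(π:ℂ) / ((α/π : ℝ):ℂ) * ((n:ℂ) + Complex.I * (Complex.I * β / (2*π)))^2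
      = ((-(π * (n:ℝ) - β/2)^2 / α : ℝ) : ℂ) := by
    intro n
    have h : Complex.I * (Complex.I * (β:ℂ) / (2*π)) = -(β:ℂ) / (2*π) := by
      rw [mul_div_assoc', ← mul_assoc, Complex.I_mul_I]; ring
    rw [h]
    push_cast
    field_simp
    ring
  simp_rw [h1, h2] at key
  -- the scalar factor
  have h3 : 1 / ((α/π : ℝ):ℂ) ^ (1/2 : ℂ) = ((Real.sqrt (π/α) : ℝ) : ℂ) := by
    rw [show (1/2 : ℂ) = ((1/2 : ℝ) : ℂ) by norm_num,
      ← Complex.ofReal_cpow (by positivity : (0:ℝ) ≤ α / π)]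
    rw [show (1 : ℂ) = ((1 : ℝ) : ℂ) by norm_num, ← Complex.ofReal_div]
    norm_cast
    rw [← Real.sqrt_eq_rpow, one_div, ← Real.sqrt_inv]
    congr 1
    field_simp
  rw [h3] at key
  -- summability facts
  have hs1 : Summable fun n : ℕ => Real.exp (-α * (n:ℝ)^2) := by
    apply Summable.of_nonneg_of_le (fun n => (Real.exp_pos _).le)
      (fun n => ?_) (summable_geometric_of_lt_one (Real.exp_pos _).le
        (Real.exp_lt_one_iff.mpr (neg_lt_zero.mpr hα)))
    rw [← Real.exp_nat_mul]
    apply Real.exp_le_exp.mpr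
    have hn : (n:ℝ) ≤ (n:ℝ)^2 := by
      have := Nat.le_self_pow (two_ne_zero) n
      exact_mod_cast this
    nlinarith [mul_le_mul_of_nonneg_left hn hα.le]
  have hsZ : Summable fun n : ℤ => Real.exp (-α * (n:ℝ)^2) := by
    apply Summable.of_nat_of_neg <;> simpa using hs1
  have hsf : Summable F := by
    apply hsZ.of_norm_bounded
    intro n
    rw [hF, norm_mul, Real.norm_eq_abs, Real.norm_eq_abs, abs_of_pos (Real.exp_pos _)]
    calc Real.exp (-α * (n:ℝ)^2) * |Real.cos (β * n)|
        ≤ Real.exp (-α * (n:ℝ)^2) * 1 :=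
          mul_le_mul_of_nonneg_left (Real.abs_cos_le_one _) (Real.exp_pos _).le
      _ = _ := mul_one _
  have hsC : Summable fun n : ℤ =>
      Complex.exp (((-α * (n:ℝ)^2 : ℝ) : ℂ) + ((β * n : ℝ) : ℂ) * Complex.I) := by
    apply Summable.of_norm
    convert hsZ using 2 with n
    rw [Complex.norm_exp, Complex.add_re, Complex.ofReal_re,
      Complex.mul_re, Complex.I_re, Complex.I_im, Complex.ofReal_im, Complex.ofReal_re]
    ring_nf
  -- take real parts of the key identity
  have key2 : (∑' n : ℤ, F n)
      = Real.sqrt (π/α) * ∑' n : ℤ, Real.exp (-(π * (n:ℝ) - β/2)^2 / α) := by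
    have h4 : (∑' n : ℤ, Complex.exp (((-(π * (n:ℝ) - β/2)^2 / α : ℝ) : ℂ)))
        = ((∑' n : ℤ, Real.exp (-(π * (n:ℝ) - β/2)^2 / α) : ℝ) : ℂ) := by
      rw [Complex.ofReal_tsum]
      exact tsum_congr fun n => by rw [Complex.ofReal_exp]
    rw [h4, ← Complex.ofReal_mul] at key
    have h5 := congrArg Complex.re key
    rw [Complex.re_tsum hsC, Complex.ofReal_re] at h5
    have hterm : ∀ n : ℤ,
        (Complex.exp (((-α * (n:ℝ)^2 : ℝ) : ℂ) + ((β * n : ℝ) : ℂ) * Complex.I)).re = F n := by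
      intro n
      rw [Complex.exp_add, ← Complex.ofReal_exp, Complex.exp_mul_I, ← Complex.ofReal_cos,
        ← Complex.ofReal_sin]
      simp only [Complex.mul_re, Complex.add_re, Complex.add_im, Complex.mul_im,
        Complex.ofReal_re, Complex.ofReal_im, Complex.I_re, Complex.I_im, hF]
      ring
    rw [tsum_congr hterm] at h5
    exact h5
  -- split the integer sum on the left
  have hinj : Function.Injective (fun n : ℕ => -((n:ℤ)+1)) := by
    intro a b h
    simp only [neg_inj, add_left_inj] at h
    exact_mod_cast h
  have hsplit : (∑' n : ℤ, F n)
      = 1 + 2 * ∑' n : ℕ, Real.exp (-α * ((n:ℝ)+1)^2) * Real.cos (β * ((n:ℝ)+1)) := by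
    have hnat : Summable fun n : ℕ => F n := hsf.comp_injective (Nat.cast_injective : Function.Injective (Nat.cast : ℕ → ℤ))
    have hneg : Summable fun n : ℕ => F (-((n:ℤ)+1)) := hsf.comp_injective hinj
    rw [tsum_of_nat_of_neg_add_one hnat hneg, hnat.tsum_eq_zero_add]
    have e0 : F 0 = 1 := by simp [hF]
    have e1 : ∀ n : ℕ, F ((n:ℤ)+1) = Real.exp (-α * ((n:ℝ)+1)^2) * Real.cos (β * ((n:ℝ)+1)) := by
      intro n; simp only [hF]; push_cast; ring_nf
    have e2 : ∀ n : ℕ, F (-((n:ℤ)+1)) = Real.exp (-α * ((n:ℝ)+1)^2) * Real.cos (β * ((n:ℝ)+1)) := by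
      intro n; simp only [hF]; push_cast
      rw [neg_sq, mul_neg, Real.cos_neg]
    have e1' : (∑' n : ℕ, F (((n:ℕ)+1 : ℕ)))
        = ∑' n : ℕ, Real.exp (-α * ((n:ℝ)+1)^2) * Real.cos (β * ((n:ℝ)+1)) :=
      tsum_congr fun n => by rw [show (((n:ℕ)+1 : ℕ) : ℤ) = (n:ℤ)+1 by push_cast; ring, e1]
    have e2' : (∑' n : ℕ, F (-((n:ℤ)+1)))
        = ∑' n : ℕ, Real.exp (-α * ((n:ℝ)+1)^2) * Real.cos (β * ((n:ℝ)+1)) :=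
      tsum_congr fun n => e2 n
    push_cast at e1' ⊢
    rw [e0, e1', e2']
    ring
  -- reindex the right-hand sum by n ↦ -n
  have hneg : (∑' n : ℤ, Real.exp (-(π * (n:ℝ) - β/2)^2 / α))
      = ∑' n : ℤ, Real.exp (-(π * (n:ℝ) + β/2)^2 / α) := by
    rw [← (Equiv.neg ℤ).tsum_eq (fun n : ℤ => Real.exp (-(π * (n:ℝ) + β/2)^2 / α))]
    apply tsum_congr
    intro n
    congr 1
    simp only [Equiv.neg_apply]
    push_cast
    ring
  rw [hsplit] at key2
  rw [hneg] at key2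
  linarith
end

section
/- Let k be a positive integer and let s be a complex number satisfying 1 − 2·2^{−s} + 2^{2k − 2s} = 0. Then Re(s) = k. -/
open Complex

/-- All zeros of `1 - 2·2^{-s} + 2^{2k-2s}` lie on the line `Re(s) = k`. -/
theorem eisenstein_factor_zeros (k : ℕ) (hk : 0 < k) (s : ℂ)
    (hs : 1 - 2 * (2 : ℂ) ^ (-s) + (2 : ℂ) ^ (2 * (k : ℂ) - 2 * s) = 0) :
    s.re = k := by
  set w : ℂ := (2 : ℂ) ^ (-s) with hw
  have h2 : (2 : ℂ) ≠ 0 := by norm_num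
  -- rewrite the cpow term
  have hsplit : (2 : ℂ) ^ (2 * (k : ℂ) - 2 * s) = ((2 : ℂ) ^ k * w) ^ 2 := by
    have h1 : 2 * (k : ℂ) - 2 * s = (2 : ℕ) * ((k : ℂ) + (-s)) := by push_cast; ring
    rw [h1, Complex.cpow_nat_mul, Complex.cpow_add _ _ h2, Complex.cpow_natCast]
  rw [hsplit] at hs
  set a : ℂ := (2 : ℂ) ^ k with ha
  have heq : a ^ 2 * w ^ 2 - 2 * w + 1 = 0 := by rw [← hs]; ring
  -- conjugated equation
  have hconj : a ^ 2 * (starRingEnd ℂ w) ^ 2 - 2 * (starRingEnd ℂ w) + 1 = 0 := by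
    have := congrArg (starRingEnd ℂ) heq
    simpa [map_sub, map_add, map_mul, map_pow, map_ofNat, ha] using this
  have har : (4 : ℝ) ≤ ((2 : ℝ) ^ k) ^ 2 := by
    have : (2 : ℝ) ≤ (2 : ℝ) ^ k := by
      calc (2 : ℝ) = 2 ^ 1 := (pow_one 2).symm
      _ ≤ 2 ^ k := pow_le_pow_right₀ one_le_two hk
    nlinarith
  -- w is not real
  have hne : starRingEnd ℂ w ≠ w := by
    intro hww
    have hwre : ((w.re : ℂ)) = w := Complex.conj_eq_iff_re.mp hww
    set t : ℝ := w.re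
    have : ((((2:ℝ)^k) ^ 2 * t ^ 2 - 2 * t + 1 : ℝ) : ℂ) = 0 := by
      rw [← heq, ← hwre]; push_cast [ha]; ring
    have ht : ((2:ℝ)^k) ^ 2 * t ^ 2 - 2 * t + 1 = 0 := by exact_mod_cast this
    nlinarith [sq_nonneg (((2:ℝ)^k) ^ 2 * t - 1), sq_nonneg (((2:ℝ)^k)*t)]
  -- Vieta: sum then product
  have hsum : a ^ 2 * (w + starRingEnd ℂ w) = 2 := by
    have hdiff : (starRingEnd ℂ w - w) * (a ^ 2 * (w + starRingEnd ℂ w) - 2) = 0 := by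
      linear_combination hconj - heq
    rcases mul_eq_zero.mp hdiff with h | h
    · exact absurd (sub_eq_zero.mp h) hne
    · linear_combination h
  have hprod : a ^ 2 * (w * starRingEnd ℂ w) = 1 := by
    linear_combination w * hsum - heq
  -- compute normSq w
  have hnormsq : Complex.normSq w = ((2:ℝ)^k)^(-2 : ℝ) := by
    have ha0 : a ≠ 0 := pow_ne_zero k h2
    have hmul : (w * starRingEnd ℂ w) = 1 / a ^ 2 := by
      rw [eq_div_iff (pow_ne_zero 2 ha0)]
      linear_combination hprod
    have : (Complex.normSq w : ℂ) = 1 / a ^ 2 := by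
      rw [← Complex.mul_conj]; exact hmul
    have h2k : ((1 : ℂ) / a ^ 2) = ((((2:ℝ)^k)^(-2 : ℝ) : ℝ) : ℂ) := by
      rw [Real.rpow_neg (by positivity), ha]
      push_cast
      rw [Real.rpow_two]
      push_cast
      field_simp
    exact_mod_cast this.trans h2k
  -- abs w = 2 ^ (-s.re)
  have habs : ‖w‖ = (2 : ℝ) ^ (-s.re) := by
    rw [hw]
    have : ((2 : ℂ)) = (((2:ℝ) : ℂ)) := by norm_num
    rw [this, Complex.norm_cpow_eq_rpow_re_of_pos two_pos]
    simp
  have hsq : ((2 : ℝ) ^ (-s.re)) ^ 2 = ((2:ℝ)^k)^(-2 : ℝ) := by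
    rw [← habs, Complex.sq_norm, hnormsq]
  -- convert to rpow equality with base 2
  have hL : ((2 : ℝ) ^ (-s.re)) ^ 2 = (2 : ℝ) ^ (-(2 : ℝ) * s.re) := by
    rw [← Real.rpow_natCast ((2:ℝ) ^ (-s.re)) 2, ← Real.rpow_mul (by norm_num)]
    norm_num; ring_nf
  have hR : ((2:ℝ)^k)^(-2 : ℝ) = (2 : ℝ) ^ (-(2 : ℝ) * (k : ℝ)) := by
    rw [← Real.rpow_natCast (2:ℝ) k, ← Real.rpow_mul (by norm_num)]
    ring_nf
  have hfin : (2 : ℝ) ^ (-(2 : ℝ) * s.re) = (2 : ℝ) ^ (-(2 : ℝ) * (k : ℝ)) := by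
    rw [← hL, ← hR, hsq]
  have := congrArg Real.log hfin
  rw [Real.log_rpow two_pos, Real.log_rpow two_pos] at this
  have hlog : Real.log 2 ≠ 0 := ne_of_gt (Real.log_pos one_lt_two)
  have : -(2 : ℝ) * s.re = -(2 : ℝ) * (k : ℝ) := by
    exact mul_right_cancel₀ hlog this
  linarith
end
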